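/- Fix an integer r ≥ 1. Let V be the set of all finite ℚ-linear combinations of the functions f_T, where T ranges over finite nonempty subsets of ℤ_{≥0}^r \ {0}. Then the set of restrictions to B of functions in V is dense in C(B,ℝ) for the uniform norm: for every continuous function f : B → ℝ and every ε > 0 there exists g ∈ V such that |f(m) − g(m)| ≤ ε for all m ∈ B. -/

import Mathlib

/-- For a finite nonempty set `T ⊆ ℤ_{≥0}^r` of integer vectors, the function
`f_T(m) = min_{α ∈ T} (α₁ m₁ + ⋯ + α_r m_r)` (written on all of `ℝ^r`;
only its restriction to the simplex matters below). -/
noncomputable def fT {r : ℕ} (T : Finset (Fin r → ℕ)) (hT : T.Nonempty) :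
    (Fin r → ℝ) → ℝ :=
  fun m => T.inf' hT fun α => ∑ i, (α i : ℝ) * m i

/-- The set of functions `f_T` for `T` a finite nonempty subset of `ℤ_{≥0}^r \ {0}`. -/
def fTSet (r : ℕ) : Set ((Fin r → ℝ) → ℝ) :=
  {f | ∃ (T : Finset (Fin r → ℕ)) (hT : T.Nonempty), (0 : Fin r → ℕ) ∉ T ∧ f = fT T hT}

namespace FTAux

variable {r : ℕ}

/-- Multiply a finite set of vectors by a natural number. -/
def scT (a : ℕ) (T : Finset (Fin r → ℕ)) : Finset (Fin r → ℕ) :=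
  T.image (fun α i => a * α i)

lemma scT_nonempty (a : ℕ) {T : Finset (Fin r → ℕ)} (hT : T.Nonempty) :
    (scT a T).Nonempty := hT.image _

lemma scT_notzero {a : ℕ} (ha : 0 < a) {T : Finset (Fin r → ℕ)}
    (h0 : (0 : Fin r → ℕ) ∉ T) : (0 : Fin r → ℕ) ∉ scT a T := by
  simp only [scT, Finset.mem_image]
  rintro ⟨α, hα, hαeq⟩
  apply h0
  have : α = 0 := by
    funext i
    have := congrFun hαeq i
    simpa [Nat.mul_eq_zero, ha.ne'] using this
  rwa [this] at hα

lemma mul_inf' {β : Type*} {s : Finset β} (hs : s.Nonempty) (f : β → ℝ) {c : ℝ}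
    (hc : 0 ≤ c) : c * s.inf' hs f = s.inf' hs (fun b => c * f b) := by
  induction hs using Finset.Nonempty.cons_induction with
  | singleton a => simp
  | cons a s ha hs ih =>
    rw [Finset.inf'_cons hs, Finset.inf'_cons hs, ← ih,
      mul_min_of_nonneg _ _ hc]

lemma fT_scT (a : ℕ) {T : Finset (Fin r → ℕ)} (hT : T.Nonempty) (m : Fin r → ℝ) :
    fT (scT a T) (scT_nonempty a hT) m = (a : ℝ) * fT T hT m := by
  unfold fT scT
  erw [Finset.inf'_image, mul_inf' hT _ (by positivity : (0:ℝ) ≤ (a:ℝ))]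
  congr 1
  funext α
  simp only [Function.comp]
  rw [Finset.mul_sum]
  congr 1; funext i; push_cast; ring

lemma addT_nonempty {T T' : Finset (Fin r → ℕ)} (hT : T.Nonempty) (hT' : T'.Nonempty) :
    (Finset.image₂ (· + ·) T T').Nonempty := hT.image₂ hT'

lemma addT_notzero {T T' : Finset (Fin r → ℕ)}
    (h0 : (0 : Fin r → ℕ) ∉ T) (h0' : (0 : Fin r → ℕ) ∉ T') :
    (0 : Fin r → ℕ) ∉ Finset.image₂ (· + ·) T T' := by
  rw [Finset.mem_image₂]
  rintro ⟨α, hα, β, hβ, hsum⟩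
  apply h0
  have : α = 0 := by
    funext i
    have h2 : α i + β i = 0 := by simpa using congrFun hsum i
    simpa using Nat.eq_zero_of_add_eq_zero_right h2
  rwa [this] at hα

lemma fT_add {T T' : Finset (Fin r → ℕ)} (hT : T.Nonempty) (hT' : T'.Nonempty)
    (m : Fin r → ℝ) :
    fT (Finset.image₂ (· + ·) T T') (addT_nonempty hT hT') m
      = fT T hT m + fT T' hT' m := by
  unfold fT
  have key : ∀ (α β : Fin r → ℕ),
      (∑ i, ((α + β) i : ℝ) * m i) = (∑ i, (α i : ℝ) * m i) + ∑ i, (β i : ℝ) * m i := by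
    intro α β
    rw [← Finset.sum_add_distrib]
    congr 1; funext i; simp only [Pi.add_apply]; push_cast; ring
  apply le_antisymm
  · obtain ⟨α, hα, hαv⟩ := Finset.exists_mem_eq_inf' hT (fun α => ∑ i, (α i : ℝ) * m i)
    obtain ⟨β, hβ, hβv⟩ := Finset.exists_mem_eq_inf' hT' (fun α => ∑ i, (α i : ℝ) * m i)
    rw [hαv, hβv, ← key]
    exact Finset.inf'_le _ (Finset.mem_image₂_of_mem hα hβ)
  · apply Finset.le_inf'
    intro γ hγ
    rw [Finset.mem_image₂] at hγ
    obtain ⟨α, hα, β, hβ, rfl⟩ := hγ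
    rw [key]
    exact add_le_add (Finset.inf'_le _ hα) (Finset.inf'_le _ hβ)

lemma fT_union {T T' : Finset (Fin r → ℕ)} (hT : T.Nonempty) (hT' : T'.Nonempty)
    (m : Fin r → ℝ) :
    fT (T ∪ T') (hT.mono Finset.subset_union_left) m
      = min (fT T hT m) (fT T' hT' m) := by
  unfold fT
  rw [Finset.inf'_union hT hT']


/-- Positive rational multiples of the `fT`'s, in normalized form `N⁻¹ • fT T`. -/
def SP (r : ℕ) : Set ((Fin r → ℝ) → ℝ) :=
  {g | ∃ (N : ℕ) (T : Finset (Fin r → ℕ)) (hT : T.Nonempty),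
    0 < N ∧ (0 : Fin r → ℕ) ∉ T ∧ g = ((N : ℚ))⁻¹ • fT T hT}

lemma smul_apply_real (q : ℚ) (g : (Fin r → ℝ) → ℝ) (m : Fin r → ℝ) :
    (q • g) m = (q : ℝ) * g m := by
  simp [Rat.smul_def]

lemma SP_subset_span : SP r ⊆ (Submodule.span ℚ (fTSet r) : Set ((Fin r → ℝ) → ℝ)) := by
  rintro g ⟨N, T, hT, hN, h0, rfl⟩
  exact Submodule.smul_mem _ _ (Submodule.subset_span ⟨T, hT, h0, rfl⟩)

lemma SP_apply {N : ℕ} {T : Finset (Fin r → ℕ)} (hT : T.Nonempty) (m : Fin r → ℝ) :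
    (((N : ℚ))⁻¹ • fT T hT) m = ((N : ℝ))⁻¹ * fT T hT m := by
  rw [smul_apply_real]; push_cast; ring

lemma SP_add {g g' : (Fin r → ℝ) → ℝ} (hg : g ∈ SP r) (hg' : g' ∈ SP r) :
    g + g' ∈ SP r := by
  obtain ⟨N, T, hT, hN, h0, rfl⟩ := hg
  obtain ⟨N', T', hT', hN', h0', rfl⟩ := hg'
  refine ⟨N * N', Finset.image₂ (· + ·) (scT N' T) (scT N T'),
    addT_nonempty (scT_nonempty _ hT) (scT_nonempty _ hT'), Nat.mul_pos hN hN',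
    addT_notzero (scT_notzero hN' h0) (scT_notzero hN h0'), ?_⟩
  funext m
  simp only [Pi.add_apply, smul_apply_real]
  rw [fT_add (scT_nonempty N' hT) (scT_nonempty N hT'), fT_scT N' hT, fT_scT N hT']
  have hNr : (N : ℝ) ≠ 0 := Nat.cast_ne_zero.mpr hN.ne'
  have hN'r : (N' : ℝ) ≠ 0 := Nat.cast_ne_zero.mpr hN'.ne'
  push_cast
  field_simp

lemma SP_min {g g' : (Fin r → ℝ) → ℝ} (hg : g ∈ SP r) (hg' : g' ∈ SP r) :
    (fun m => min (g m) (g' m)) ∈ SP r := by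
  obtain ⟨N, T, hT, hN, h0, rfl⟩ := hg
  obtain ⟨N', T', hT', hN', h0', rfl⟩ := hg'
  refine ⟨N * N', scT N' T ∪ scT N T',
    (scT_nonempty N' hT).mono Finset.subset_union_left, Nat.mul_pos hN hN',
    ?_, ?_⟩
  · rw [Finset.mem_union]
    rintro (h | h)
    exacts [scT_notzero hN' h0 h, scT_notzero hN h0' h]
  · funext m
    simp only [smul_apply_real]
    rw [fT_union (scT_nonempty N' hT) (scT_nonempty N hT') m, fT_scT N' hT m, fT_scT N hT' m]
    have hNr : (0 : ℝ) < (N : ℝ) := by exact_mod_cast hN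
    have hN'r : (0 : ℝ) < (N' : ℝ) := by exact_mod_cast hN'
    have key : ∀ x y : ℝ, ((N:ℝ))⁻¹ * x ⊓ ((N':ℝ))⁻¹ * y
        = ((N:ℝ) * (N':ℝ))⁻¹ * min ((N':ℝ) * x) ((N:ℝ) * y) := by
      intro x y
      rw [mul_min_of_nonneg _ _ (by positivity : (0:ℝ) ≤ ((N:ℝ) * (N':ℝ))⁻¹)]
      congr 1 <;> field_simp <;> ring
    push_cast
    exact key _ _

lemma SP_smul {q : ℚ} (hq : 0 < q) {g : (Fin r → ℝ) → ℝ} (hg : g ∈ SP r) :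
    q • g ∈ SP r := by
  obtain ⟨N, T, hT, hN, h0, rfl⟩ := hg
  have hnum : 0 < q.num := Rat.num_pos.mpr hq
  have hnumt : 0 < q.num.toNat := by omega
  refine ⟨q.den * N, scT q.num.toNat T, scT_nonempty _ hT,
    Nat.mul_pos q.den_pos hN, scT_notzero hnumt h0, ?_⟩
  funext m
  simp only [smul_apply_real]
  rw [fT_scT q.num.toNat hT m]
  have h1 : (q.num.toNat : ℝ) = (q.num : ℝ) := by exact_mod_cast Int.toNat_of_nonneg hnum.le
  have h2 : (q : ℝ) = (q.num : ℝ) / (q.den : ℝ) := by rw [Rat.cast_def]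
  have hNr : (N : ℝ) ≠ 0 := Nat.cast_ne_zero.mpr hN.ne'
  have hdr : (q.den : ℝ) ≠ 0 := Nat.cast_ne_zero.mpr q.den_nz
  rw [h1, h2]
  push_cast
  field_simp

lemma SP_nonempty (hr : 1 ≤ r) : ∃ p, p ∈ SP r := by
  refine ⟨_, 1, {fun _ => 1}, Finset.singleton_nonempty _, Nat.one_pos, ?_, rfl⟩
  simp only [Finset.mem_singleton]
  intro h
  have := congrFun h ⟨0, hr⟩
  simp at this

lemma span_rep (hr : 1 ≤ r) {g : (Fin r → ℝ) → ℝ}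
    (hg : g ∈ Submodule.span ℚ (fTSet r)) :
    ∃ p ∈ SP r, ∃ n ∈ SP r, g = p - n := by
  induction hg using Submodule.span_induction with
  | mem x hx =>
    obtain ⟨T, hT, h0, rfl⟩ := hx
    refine ⟨(1 : ℚ)⁻¹ • fT (scT 2 T) (scT_nonempty 2 hT),
      ⟨1, scT 2 T, scT_nonempty 2 hT, Nat.one_pos, scT_notzero (by norm_num) h0, by push_cast; rfl⟩,
      (1 : ℚ)⁻¹ • fT T hT, ⟨1, T, hT, Nat.one_pos, h0, by push_cast; rfl⟩, ?_⟩
    funext m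
    simp only [Pi.sub_apply, smul_apply_real]
    rw [fT_scT 2 hT m]
    push_cast
    ring
  | zero =>
    obtain ⟨p, hp⟩ := SP_nonempty hr
    exact ⟨p, hp, p, hp, by rw [sub_self]⟩
  | add x y hx hy ihx ihy =>
    obtain ⟨p, hp, n, hn, rfl⟩ := ihx
    obtain ⟨p', hp', n', hn', rfl⟩ := ihy
    exact ⟨p + p', SP_add hp hp', n + n', SP_add hn hn', by abel⟩
  | smul q x hx ihx =>
    obtain ⟨p, hp, n, hn, rfl⟩ := ihx
    rcases lt_trichotomy q 0 with hq | rfl | hq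
    · refine ⟨(-q) • n, SP_smul (by linarith) hn, (-q) • p, SP_smul (by linarith) hp, ?_⟩
      rw [smul_sub]; module
    · obtain ⟨p₀, hp₀⟩ := SP_nonempty hr
      exact ⟨p₀, hp₀, p₀, hp₀, by rw [zero_smul, sub_self]⟩
    · exact ⟨q • p, SP_smul hq hp, q • n, SP_smul hq hn, by rw [smul_sub]⟩

lemma min_sub_sub (a b c d : ℝ) : min (a - b) (c - d) = min (a + d) (c + b) - (b + d) := by
  rcases le_total (a - b) (c - d) with h | h
  · rw [min_eq_left h, min_eq_left (by linarith)]; ring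
  · rw [min_eq_right h, min_eq_right (by linarith)]; ring

lemma fT_continuous {T : Finset (Fin r → ℕ)} (hT : T.Nonempty) :
    Continuous (fT T hT) := by
  show Continuous fun m : Fin r → ℝ => T.inf' hT fun α => ∑ i, (α i : ℝ) * m i
  exact Continuous.finset_inf'_apply (f := fun (α : Fin r → ℕ) (m : Fin r → ℝ) =>
      ∑ i, (α i : ℝ) * m i) hT fun α _ =>
    continuous_finset_sum _ fun i _ => continuous_const.mul (continuous_apply i)

lemma span_continuous {g : (Fin r → ℝ) → ℝ} (hr : 1 ≤ r)
    (hg : g ∈ Submodule.span ℚ (fTSet r)) : Continuous g := by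
  obtain ⟨p, hp, n, hn, rfl⟩ := span_rep hr hg
  obtain ⟨N, T, hT, hN, h0, rfl⟩ := hp
  obtain ⟨N', T', hT', hN', h0', rfl⟩ := hn
  have c1 : Continuous (((N : ℚ))⁻¹ • fT T hT) := by
    convert continuous_const.mul (fT_continuous hT) (f := fun _ => ((((N : ℚ))⁻¹ : ℚ) : ℝ)) using 1
    funext m; exact smul_apply_real _ _ _
  have c2 : Continuous (((N' : ℚ))⁻¹ • fT T' hT') := by
    convert continuous_const.mul (fT_continuous hT') (f := fun _ => ((((N' : ℚ))⁻¹ : ℚ) : ℝ)) using 1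
    funext m; exact smul_apply_real _ _ _
  exact c1.sub c2

end FTAux

open FTAux in
/-- **Density of skeletal functions of model special divisors.**
The restrictions to the standard simplex `B` of the ℚ-linear combinations of the
functions `f_T` are dense in `C(B, ℝ)` for the uniform norm: for every continuous
`f : B → ℝ` and every `ε > 0` there is `g` in the ℚ-span with
`|f(m) − g(m)| ≤ ε` for all `m ∈ B`. -/
theorem span_fT_dense_on_simplex {r : ℕ} (hr : 1 ≤ r)
    (f : (Fin r → ℝ) → ℝ) (hf : ContinuousOn f (stdSimplex ℝ (Fin r)))
    (ε : ℝ) (hε : 0 < ε) :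
    ∃ g ∈ Submodule.span ℚ (fTSet r), ∀ m ∈ stdSimplex ℝ (Fin r), |f m - g m| ≤ ε := by
  haveI : CompactSpace (stdSimplex ℝ (Fin r)) :=
    isCompact_iff_compactSpace.mp (isCompact_stdSimplex _ _)
  set X := stdSimplex ℝ (Fin r) with hX
  -- the set of restrictions of elements of the span
  let L : Set C(X, ℝ) :=
    {φ | ∃ g ∈ Submodule.span ℚ (fTSet r), ∀ x : X, φ x = g x.val}
  -- restriction of a span element is in L
  have mem_L : ∀ (g) (hg : g ∈ Submodule.span ℚ (fTSet r)),
      (⟨fun x : X => g x.val, (span_continuous hr hg).comp continuous_subtype_val⟩ : C(X, ℝ)) ∈ L :=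
    fun g hg => ⟨g, hg, fun x => rfl⟩
  -- L is nonempty
  have hL_ne : L.Nonempty := by
    obtain ⟨p, hp⟩ := SP_nonempty (r := r) hr
    exact ⟨_, mem_L p (SP_subset_span hp)⟩
  -- L is closed under pointwise min
  have hL_inf : ∀ φ ∈ L, ∀ ψ ∈ L, φ ⊓ ψ ∈ L := by
    rintro φ ⟨g, hg, hφ⟩ ψ ⟨g', hg', hψ⟩
    obtain ⟨p, hp, n, hn, rfl⟩ := span_rep hr hg
    obtain ⟨p', hp', n', hn', rfl⟩ := span_rep hr hg'
    refine ⟨(fun m => min ((p + n') m) ((p' + n) m)) - (n + n'),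
      Submodule.sub_mem _
        (SP_subset_span (SP_min (SP_add hp hn') (SP_add hp' hn)))
        (SP_subset_span (SP_add hn hn')), ?_⟩
    intro x
    have hφx := hφ x
    have hψx := hψ x
    simp only [Pi.sub_apply, Pi.add_apply] at hφx hψx ⊢
    rw [ContinuousMap.inf_apply, hφx, hψx, min_sub_sub]
  -- L is closed under pointwise max
  have hL_sup : ∀ φ ∈ L, ∀ ψ ∈ L, φ ⊔ ψ ∈ L := by
    rintro φ ⟨g, hg, hφ⟩ ψ ⟨g', hg', hψ⟩
    obtain ⟨g'', hg'', hφψ⟩ := hL_inf φ ⟨g, hg, hφ⟩ ψ ⟨g', hg', hψ⟩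
    refine ⟨g + g' - g'', Submodule.sub_mem _ (Submodule.add_mem _ hg hg') hg'', ?_⟩
    intro x
    have h1 := hφψ x
    rw [ContinuousMap.inf_apply] at h1
    have : (φ ⊔ ψ) x = max (φ x) (ψ x) := rfl
    rw [this]
    simp only [Pi.sub_apply, Pi.add_apply]
    rw [← hφ x, ← hψ x, ← h1]
    rcases le_total (φ x) (ψ x) with h | h
    · rw [max_eq_right h, min_eq_left h]; ring
    · rw [max_eq_left h, min_eq_right h]; ring
  -- the closure of L
  set M := closure L with hM
  have hM_ne : M.Nonempty := hL_ne.mono subset_closure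
  have hM_inf : ∀ φ ∈ M, ∀ ψ ∈ M, φ ⊓ ψ ∈ M := by
    intro φ hφ ψ hψ
    rw [hM, Metric.mem_closure_iff] at hφ hψ ⊢
    intro δ hδ
    obtain ⟨φ', hφ', hdφ⟩ := hφ δ hδ
    obtain ⟨ψ', hψ', hdψ⟩ := hψ δ hδ
    refine ⟨φ' ⊓ ψ', hL_inf φ' hφ' ψ' hψ', ?_⟩
    rw [ContinuousMap.dist_lt_iff hδ]
    intro x
    calc dist ((φ ⊓ ψ) x) ((φ' ⊓ ψ') x)
        = |min (φ x) (ψ x) - min (φ' x) (ψ' x)| := by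
          rw [ContinuousMap.inf_apply, ContinuousMap.inf_apply, Real.dist_eq]
      _ ≤ max |φ x - φ' x| |ψ x - ψ' x| := abs_min_sub_min_le_max _ _ _ _
      _ < δ := by
          apply max_lt
          · exact lt_of_le_of_lt (by rw [← Real.dist_eq]; exact ContinuousMap.dist_apply_le_dist x) hdφ
          · exact lt_of_le_of_lt (by rw [← Real.dist_eq]; exact ContinuousMap.dist_apply_le_dist x) hdψ
  have hM_sup : ∀ φ ∈ M, ∀ ψ ∈ M, φ ⊔ ψ ∈ M := by
    intro φ hφ ψ hψ
    rw [hM, Metric.mem_closure_iff] at hφ hψ ⊢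
    intro δ hδ
    obtain ⟨φ', hφ', hdφ⟩ := hφ δ hδ
    obtain ⟨ψ', hψ', hdψ⟩ := hψ δ hδ
    refine ⟨φ' ⊔ ψ', hL_sup φ' hφ' ψ' hψ', ?_⟩
    rw [ContinuousMap.dist_lt_iff hδ]
    intro x
    calc dist ((φ ⊔ ψ) x) ((φ' ⊔ ψ') x)
        = |max (φ x) (ψ x) - max (φ' x) (ψ' x)| := by rw [Real.dist_eq]; rfl
      _ ≤ max |φ x - φ' x| |ψ x - ψ' x| := abs_max_sub_max_le_max _ _ _ _
      _ < δ := by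
          apply max_lt
          · exact lt_of_le_of_lt (by rw [← Real.dist_eq]; exact ContinuousMap.dist_apply_le_dist x) hdφ
          · exact lt_of_le_of_lt (by rw [← Real.dist_eq]; exact ContinuousMap.dist_apply_le_dist x) hdψ
  -- affine functions with rational coefficients are in L
  have hone : (0 : Fin r → ℕ) ∉ ({fun _ => 1} : Finset (Fin r → ℕ)) := by
    simp only [Finset.mem_singleton]
    intro h
    exact absurd (congrFun h ⟨0, hr⟩) (by simp)
  have hsingle : ∀ i : Fin r, (0 : Fin r → ℕ) ∉ ({Pi.single i 1} : Finset (Fin r → ℕ)) := by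
    intro i
    simp only [Finset.mem_singleton]
    intro h
    have := congrFun h i
    simp at this
  have coord_eval : ∀ (i : Fin r) (m : Fin r → ℝ),
      fT {Pi.single i 1} (Finset.singleton_nonempty _) m = m i := by
    intro i m
    unfold fT
    rw [Finset.inf'_singleton]
    simp [Pi.single_apply, ite_mul]
  have one_eval : ∀ x : X, fT ({fun _ => 1} : Finset (Fin r → ℕ))
      (Finset.singleton_nonempty _) x.val = 1 := by
    intro x
    unfold fT
    rw [Finset.inf'_singleton]
    simpa using x.2.2
  -- real affine functions of one coordinate are in M
  have key : ∀ (i : Fin r) (a b : ℝ),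
      (⟨fun x : X => a * x.val i + b,
        (continuous_const.mul ((continuous_apply i).comp continuous_subtype_val)).add
          continuous_const⟩ : C(X, ℝ)) ∈ M := by
    intro i a b
    rw [hM, Metric.mem_closure_iff]
    intro δ hδ
    obtain ⟨q, hq⟩ := exists_rat_near a (by linarith : (0:ℝ) < δ/2)
    obtain ⟨q', hq'⟩ := exists_rat_near b (by linarith : (0:ℝ) < δ/2)
    have hg : q • fT {Pi.single i 1} (Finset.singleton_nonempty _)
        + q' • fT ({fun _ => 1} : Finset (Fin r → ℕ)) (Finset.singleton_nonempty _)
        ∈ Submodule.span ℚ (fTSet r) :=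
      Submodule.add_mem _
        (Submodule.smul_mem _ _ (Submodule.subset_span
          ⟨{Pi.single i 1}, Finset.singleton_nonempty _, hsingle i, rfl⟩))
        (Submodule.smul_mem _ _ (Submodule.subset_span
          ⟨{fun _ => 1}, Finset.singleton_nonempty _, hone, rfl⟩))
    refine ⟨_, mem_L _ hg, ?_⟩
    rw [ContinuousMap.dist_lt_iff hδ]
    intro x
    have hx0 : (0:ℝ) ≤ x.val i := x.2.1 i
    have hx1 : x.val i ≤ 1 := by
      rw [← x.2.2]
      exact Finset.single_le_sum (fun j _ => x.2.1 j) (Finset.mem_univ i)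
    have hval : (q • fT {Pi.single i 1} (Finset.singleton_nonempty _)
        + q' • fT ({fun _ => 1} : Finset (Fin r → ℕ)) (Finset.singleton_nonempty _)) x.val
        = (q : ℝ) * x.val i + (q' : ℝ) := by
      simp only [Pi.add_apply, smul_apply_real]
      rw [coord_eval, one_eval]
      ring
    simp only [ContinuousMap.coe_mk, Real.dist_eq, hval]
    have habs : |a * x.val i + b - ((q : ℝ) * x.val i + (q' : ℝ))|
        ≤ |a - q| * x.val i + |b - q'| := by
      have : a * x.val i + b - ((q : ℝ) * x.val i + (q' : ℝ))
          = (a - q) * x.val i + (b - q') := by ring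
      rw [this]
      exact (abs_add_le _ _).trans (by rw [abs_mul, abs_of_nonneg hx0])
    have : |a - q| * x.val i ≤ |a - q| := by
      nlinarith [abs_nonneg (a - (q:ℝ))]
    calc |a * x.val i + b - ((q : ℝ) * x.val i + (q' : ℝ))|
        ≤ |a - q| + |b - q'| := by linarith
      _ < δ/2 + δ/2 := add_lt_add hq hq'
      _ = δ := by ring
  -- M separates points strongly
  have sep : M.SeparatesPointsStrongly := by
    intro v x y
    by_cases hxy : x = y
    · subst hxy
      refine ⟨_, key ⟨0, hr⟩ 0 (v x), ?_, ?_⟩ <;> · show (0:ℝ) * _ + v x = v x; ring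
    · have hne : x.val ≠ y.val := fun h => hxy (Subtype.ext h)
      obtain ⟨i, hi⟩ : ∃ i, x.val i ≠ y.val i := by
        by_contra h
        push_neg at h
        exact hne (funext h)
      refine ⟨_, key i ((v x - v y) / (x.val i - y.val i))
        (v x - (v x - v y) / (x.val i - y.val i) * x.val i), ?_, ?_⟩
      · show _ * _ + _ = v x
        ring
      · show (v x - v y) / (x.val i - y.val i) * y.val i
            + (v x - (v x - v y) / (x.val i - y.val i) * x.val i) = v y
        have hsub : x.val i - y.val i ≠ 0 := sub_ne_zero.mpr hi
        field_simp
        ring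
  -- Stone-Weierstrass for sublattices
  have htop := ContinuousMap.sublattice_closure_eq_top M hM_ne hM_inf hM_sup sep
  rw [hM, closure_closure] at htop
  -- the target function as a continuous map on X
  have hF : (⟨X.restrict f, hf.restrict⟩ : C(X, ℝ)) ∈ closure L := by
    rw [htop]; trivial
  rw [Metric.mem_closure_iff] at hF
  obtain ⟨φ, ⟨g, hg, hφ⟩, hdist⟩ := hF ε hε
  refine ⟨g, hg, fun m hm => ?_⟩
  have h1 : dist ((⟨X.restrict f, hf.restrict⟩ : C(X, ℝ)) ⟨m, hm⟩) (φ ⟨m, hm⟩)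
      ≤ dist (⟨X.restrict f, hf.restrict⟩ : C(X, ℝ)) φ :=
    ContinuousMap.dist_apply_le_dist _
  rw [hφ ⟨m, hm⟩] at h1
  have h2 : dist (f m) (g m) ≤ dist (⟨X.restrict f, hf.restrict⟩ : C(X, ℝ)) φ := h1
  rw [Real.dist_eq] at h2
  exact h2.trans hdist.le
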